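/- Let C be an abelian category, X ⊆ C closed under extensions and direct summands, and T ⊆ C closed under direct summands satisfying (T1) pd_X(T) < ∞, (T2) T ∩ X ⊆ T^⊥, (T4) existence of a relative cogenerator α ⊆ X^⊥ ∩ T^⊥ in X, and (T5) existence of T-precovers in X for objects of X ∩ T^⊥. Then T satisfies (T3) (there is a relative generator ω in X with ω ⊆ T^∨_X) if and only if T^⊥ ∩ X ⊆ Fac^X_1(T) and there is a relative generator ω in X with ω ⊆ (T∩X)^∨_X. -/

import Mathlib

open CategoryTheory CategoryTheory.Limits CategoryTheory.Abelian ZeroObject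

universe w v u

namespace RelTilting

variable {C : Type u} [Category.{v} C] [Abelian C]

/-- `f`, `g` form a short exact sequence `0 → A → B → D → 0`. -/
def IsSES {A B D : C} (f : A ⟶ B) (g : B ⟶ D) : Prop :=
  ∃ w : f ≫ g = 0, (ShortComplex.mk f g w).ShortExact

/-- There is a short exact sequence `0 → A → B → D → 0`. -/
def SES (A B D : C) : Prop := ∃ (f : A ⟶ B) (g : B ⟶ D), IsSES f g

/-- A class of objects is closed under extensions. -/
def ExtClosed (P : C → Prop) : Prop :=
  ∀ ⦃A B D : C⦄, SES A B D → P A → P D → P B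

/-- A class of objects is closed under direct summands. -/
def SmdClosed (P : C → Prop) : Prop :=
  ∀ (A V : C), P V → (∃ (i : A ⟶ V) (r : V ⟶ A), i ≫ r = 𝟙 A) → P A

/-- A class of objects is closed under finite (binary) direct sums. -/
def SumClosed (P : C → Prop) : Prop :=
  ∀ (A B : C), P A → P B → P (A ⊞ B)

/-- A class is closed under CoCones (kernels of epis between its objects). -/
def CoConeClosed (P : C → Prop) : Prop :=
  ∀ ⦃A B D : C⦄, SES A B D → P B → P D → P A

/-- A class is left thick. -/
def LeftThick (P : C → Prop) : Prop :=
  ExtClosed P ∧ SmdClosed P ∧ CoConeClosed P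

variable [HasExt.{w} C]

/-- `Ext^i(A,B) = 0` for all `i ≥ 1`. -/
def extVanish (A B : C) : Prop := ∀ i : ℕ, 1 ≤ i → Subsingleton (Ext A B i)

/-- The right orthogonal class `T^⊥`. -/
def rightPerp (T : C → Prop) : C → Prop := fun B => ∀ A, T A → extVanish A B

/-- The left orthogonal class `^⊥S`. -/
def leftPerp (S : C → Prop) : C → Prop := fun A => ∀ B, S B → extVanish A B

/-- `pd_X(M) ≤ n`. -/
def pdLE (T X : C → Prop) (n : ℕ) : Prop :=
  ∀ M, T M → ∀ X', X X' → ∀ k, n < k → Subsingleton (Ext M X' k)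

/-- `M` has a finite coresolution of length `n` with middle terms in `B`
and cokernels in `A`, ending in `A ∩ B`. -/
def CoresLen (B A : C → Prop) : ℕ → C → Prop
  | 0 => fun M => B M ∧ A M
  | (n+1) => fun M => ∃ Y0 N0 : C, B Y0 ∧ A N0 ∧ SES M Y0 N0 ∧ CoresLen B A n N0

/-- The coresolution dimension of `M` (with middle terms in `B`,
cokernels in `A`) equals `n`. -/
def CoresDimEq (B A : C → Prop) (M : C) (n : ℕ) : Prop :=
  CoresLen B A n M ∧ ∀ m : ℕ, m < n → ¬ CoresLen B A m M

/-- Specification of an infinite coresolution of `M` with middle terms `Yk`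
(in `B ∪ {0}`) and cokernels `Nk` (in `A ∪ {0}`). -/
def InfCoresSpec (B A : C → Prop) (M : C) (Yk Nk : ℕ → C) : Prop :=
  (∀ k, B (Yk k) ∨ IsZero (Yk k)) ∧ (∀ k, A (Nk k) ∨ IsZero (Nk k)) ∧
    SES M (Yk 0) (Nk 0) ∧ ∀ k, SES (Nk k) (Yk (k+1)) (Nk (k+1))

/-- `M` has a (possibly infinite) coresolution with middle terms in `B ∪ {0}`
and cokernels in `A ∪ {0}`. -/
def InfCores (B A : C → Prop) (M : C) : Prop :=
  ∃ Yk Nk : ℕ → C, InfCoresSpec B A M Yk Nk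

/-- The class `(A,B)^∨_∞`. -/
def PairVeeInf (A B : C → Prop) (M : C) : Prop := A M ∧ InfCores B A M

/-- `coresdim^A_B(M) ≤ n`, via infinite coresolutions vanishing beyond `n`. -/
def InfCoresDimLE (B A : C → Prop) (M : C) (n : ℕ) : Prop :=
  ∃ Yk Nk : ℕ → C, InfCoresSpec B A M Yk Nk ∧ ∀ k, n < k → IsZero (Yk k)

/-- The class `T^∨` of objects with a finite coresolution by objects of `T`. -/
def Vee (T : C → Prop) : C → Prop := fun M => ∃ n, CoresLen T (fun _ => True) n M

/-- The class `T^∨_X`. -/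
def VeeRel (T X : C → Prop) : C → Prop := fun M => ∃ n, CoresLen T X n M

/-- `ω` is a relative generator in `X`. -/
def RelGen (ω X : C → Prop) : Prop :=
  (∀ W, ω W → X W) ∧ ∀ X0, X X0 → ∃ X' W : C, X X' ∧ ω W ∧ SES X' W X0

/-- `α` is a relative cogenerator in `X`. -/
def RelCogen (α X : C → Prop) : Prop :=
  (∀ I, α I → X I) ∧ ∀ X0, X X0 → ∃ I X' : C, α I ∧ X X' ∧ SES X0 I X'

/-- `f : T' ⟶ Z` is a `T`-precover of `Z`. -/
def IsPrecover (T : C → Prop) {T' Z : C} (f : T' ⟶ Z) : Prop :=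
  T T' ∧ ∀ T'' : C, T T'' → ∀ h : T'' ⟶ Z, ∃ k : T'' ⟶ T', k ≫ f = h

/-- `g : Z ⟶ M` is an `X`-preenvelope of `Z`. -/
def IsPreenvelope (X : C → Prop) {Z M : C} (g : Z ⟶ M) : Prop :=
  X M ∧ ∀ X' : C, X X' → ∀ h : Z ⟶ X', ∃ k : M ⟶ X', g ≫ k = h

/-- The class `Fac^X_n(T)`. -/
def Fac (T X : C → Prop) : ℕ → C → Prop
  | 0 => fun _ => True
  | (n+1) => fun M => ∃ K T1 : C, X K ∧ (T T1 ∧ X T1) ∧ SES K T1 M ∧ Fac T X n K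

/-- `Y` is closed by `n`-quotients in `X`. -/
def ClosedByNQuotients (Y X : C → Prop) (n : ℕ) : Prop :=
  ∀ (K Ymid : ℕ → C), X (K 0) →
    (∀ i, 1 ≤ i → i ≤ n → Y (Ymid i) ∧ X (K i) ∧ SES (K i) (Ymid i) (K (i-1))) →
    Y (K 0)




noncomputable def singleCompHomologyIso [HasDerivedCategory C] :
    DerivedCategory.singleFunctor C 0 ⋙ DerivedCategory.homologyFunctor C 0 ≅ 𝟭 C :=
  Functor.isoWhiskerRight ((SingleFunctors.evaluation _ _ 0).mapIso
      (DerivedCategory.singleFunctorsPostcompQIso C)) _ ≪≫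
    Functor.associator _ _ _ ≪≫
    Functor.isoWhiskerLeft _ (DerivedCategory.homologyFunctorFactors C 0) ≪≫
    HomologicalComplex.homologyFunctorSingleIso C _ 0

noncomputable def extToHom {A B : C} (x : Ext A B 0) : A ⟶ B :=
  letI := HasDerivedCategory.standard C
  (singleCompHomologyIso (C := C)).inv.app A ≫
    (DerivedCategory.homologyFunctor C 0).map
      (x.hom ≫ (shiftFunctorZero' (DerivedCategory C) ((0 : ℕ) : ℤ) (by simp)).hom.app _) ≫
    (singleCompHomologyIso (C := C)).hom.app B

lemma extToHom_mk₀ {A B : C} (f : A ⟶ B) : extToHom (Ext.mk₀ f) = f := by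
  letI := HasDerivedCategory.standard C
  have h1 : (Ext.mk₀ f).hom ≫ (shiftFunctorZero' (DerivedCategory C) ((0 : ℕ) : ℤ)
      (by simp)).hom.app _ = (DerivedCategory.singleFunctor C 0).map f := by
    rw [Ext.mk₀_hom]
    dsimp [ShiftedHom.mk₀]
    simp
  have h2 := (singleCompHomologyIso (C := C)).hom.naturality f
  dsimp at h2
  rw [extToHom, h1]
  rw [← cancel_epi ((singleCompHomologyIso (C := C)).hom.app A)]
  slice_lhs 1 2 => rw [Iso.hom_inv_id_app]
  simpa using h2

lemma extToHom_mk₀_comp {A B D : C} (f : A ⟶ B) (x : Ext B D 0) :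
    extToHom ((Ext.mk₀ f).comp x (zero_add 0)) = f ≫ extToHom x := by
  letI := HasDerivedCategory.standard C
  have h1 : ((Ext.mk₀ f).comp x (zero_add 0)).hom =
      (DerivedCategory.singleFunctor C 0).map f ≫ x.hom :=
    (Ext.singleFunctor_map_comp_hom f x).symm
  have h2 := (singleCompHomologyIso (C := C)).hom.naturality f
  dsimp at h2
  rw [extToHom, h1, Category.assoc, Functor.map_comp]
  rw [extToHom]
  rw [← cancel_epi ((singleCompHomologyIso (C := C)).hom.app A)]
  slice_lhs 1 2 => rw [Iso.hom_inv_id_app]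
  slice_rhs 1 2 => rw [← h2]
  simp

lemma exists_factor_of_ext1_subsingleton {S : ShortComplex C} (hS : S.ShortExact) {A : C}
    (hv : Subsingleton (Ext.{w} S.X₃ A 1)) (g : S.X₁ ⟶ A) :
    ∃ h : S.X₂ ⟶ A, S.f ≫ h = g := by
  obtain ⟨x₂, hx₂⟩ := Ext.contravariant_sequence_exact₁ hS A (Ext.mk₀ g) rfl
    (Subsingleton.elim _ _)
  exact ⟨extToHom x₂, by rw [← extToHom_mk₀ (C := C) g, ← hx₂, extToHom_mk₀_comp]⟩

lemma fac_step {X' W A Y0 N0 : C}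
    (i : X' ⟶ W) (g : W ⟶ A) (wi : i ≫ g = 0) (h1 : (ShortComplex.mk i g wi).ShortExact)
    (ι : W ⟶ Y0) (p : Y0 ⟶ N0) (wp : ι ≫ p = 0) (h2 : (ShortComplex.mk ι p wp).ShortExact)
    (h : Y0 ⟶ A) (hh : ι ≫ h = g) :
    ∃ (K : C) (a : X' ⟶ K) (b : K ⟶ N0) (f' : K ⟶ Y0) (g' : Y0 ⟶ A)
      (wab : a ≫ b = 0) (wfg : f' ≫ g' = 0),
      (ShortComplex.mk a b wab).ShortExact ∧ (ShortComplex.mk f' g' wfg).ShortExact := by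
  have hmι : Mono ι := h2.mono_f
  have hmi : Mono i := h1.mono_f
  have heg : Epi g := h1.epi_g
  have hep : Epi p := h2.epi_g
  have heh : Epi h := epi_of_epi_fac hh
  refine ⟨kernel h, kernel.lift h (i ≫ ι) (by rw [Category.assoc, hh, wi]),
    kernel.ι h ≫ p, kernel.ι h, h,
    by rw [← Category.assoc, kernel.lift_ι, Category.assoc, wp, comp_zero],
    kernel.condition h, ?_, ?_⟩
  · have hm : Mono (kernel.lift h (i ≫ ι) (by rw [Category.assoc, hh, wi])) :=
      mono_of_mono_fac (kernel.lift_ι _ _ _)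
    have he : Epi (kernel.ι h ≫ p) := by
      rw [epi_iff_surjective_up_to_refinements]
      intro B y
      obtain ⟨B1, π1, hπ1, t, ht⟩ := surjective_up_to_refinements_of_epi p y
      obtain ⟨B2, π2, hπ2, w1, hw1⟩ := surjective_up_to_refinements_of_epi g (t ≫ h)
      refine ⟨B2, π2 ≫ π1, epi_comp _ _, kernel.lift h (π2 ≫ t - w1 ≫ ι) ?_, ?_⟩
      · rw [Preadditive.sub_comp, Category.assoc, Category.assoc, hh, ← hw1]
        simp
      · rw [← Category.assoc, kernel.lift_ι, Preadditive.sub_comp,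
          Category.assoc w1 ι p, wp, comp_zero, sub_zero, Category.assoc, ht,
          Category.assoc]
    have hex : (ShortComplex.mk (kernel.lift h (i ≫ ι)
        (by rw [Category.assoc, hh, wi])) (kernel.ι h ≫ p)
        (by rw [← Category.assoc, kernel.lift_ι, Category.assoc, wp, comp_zero])).Exact := by
      rw [ShortComplex.exact_iff_exact_up_to_refinements]
      intro B c hc
      dsimp at c hc ⊢
      rw [← Category.assoc] at hc
      obtain ⟨B1, π1, hπ1, w1, hw1⟩ := h2.exact.exact_up_to_refinements (c ≫ kernel.ι h)
        (by rw [Category.assoc]; exact (by rw [← Category.assoc]; exact hc))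
      dsimp at w1 hw1
      have hw1g : w1 ≫ g = 0 := by
        rw [← hh, ← Category.assoc, ← hw1]
        simp [kernel.condition]
      obtain ⟨B2, π2, hπ2, x1, hx1⟩ := h1.exact.exact_up_to_refinements w1 hw1g
      dsimp at x1 hx1
      refine ⟨B2, π2 ≫ π1, epi_comp _ _, x1, ?_⟩
      rw [← cancel_mono (kernel.ι h)]
      simp only [Category.assoc, kernel.lift_ι]
      rw [hw1, ← Category.assoc, hx1, Category.assoc]
    exact ⟨hex⟩
  · exact ⟨ShortComplex.exact_of_f_is_kernel _ (kernelIsKernel h)⟩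

lemma coresLen_mono {T X : C → Prop} :
    ∀ (n : ℕ) (M : C), CoresLen (fun A => T A ∧ X A) X n M → CoresLen T X n M
  | 0, _, h => ⟨h.1.1, h.2⟩
  | (n+1), _, ⟨Y0, N0, hY0, hN0, hs, hr⟩ => ⟨Y0, N0, hY0.1, hN0, hs, coresLen_mono n N0 hr⟩

lemma coresLen_inter {T X : C → Prop} (hXext : ExtClosed X) :
    ∀ (n : ℕ) (M : C), X M → CoresLen T X n M → CoresLen (fun A => T A ∧ X A) X n M
  | 0, _, hMX, h => ⟨⟨h.1, hMX⟩, h.2⟩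
  | (n+1), _, hMX, ⟨Y0, N0, hY0, hN0, hs, hr⟩ =>
    ⟨Y0, N0, ⟨hY0, hXext hs hMX hN0⟩, hN0, hs, coresLen_inter hXext n N0 hN0 hr⟩

lemma extVanish_of_coresLen {T X : C → Prop} {A : C} (hA : rightPerp T A) :
    ∀ (n : ℕ) (M : C), CoresLen T X n M → extVanish M A := by
  intro n
  induction n with
  | zero => exact fun M hM => hA M hM.1
  | succ n ih =>
    rintro M ⟨Y0, N0, hY0, hN0, ⟨f, g, w, hse⟩, hres⟩
    intro k hk
    have h1 : Subsingleton (Ext Y0 A k) := hA Y0 hY0 k hk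
    have h2 : Subsingleton (Ext N0 A (1 + k)) := ih N0 hres (1 + k) (by omega)
    refine subsingleton_of_forall_eq 0 fun x => ?_
    obtain ⟨x₂, hx₂⟩ := Ext.contravariant_sequence_exact₁ hse A x rfl
      (Subsingleton.elim _ _)
    rw [← hx₂, Subsingleton.elim x₂ 0, Ext.comp_zero]


theorem stmt14 (X T : C → Prop)
    (hXext : ExtClosed X) (hXsmd : SmdClosed X) (hTsmd : SmdClosed T)
    (hT1 : ∃ n : ℕ, pdLE T X n)
    (hT2 : ∀ M, T M → X M → rightPerp T M)
    (hT4 : ∃ α : C → Prop, (∀ I, α I → rightPerp X I ∧ rightPerp T I) ∧ RelCogen α X)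
    (hT5 : ∀ Z, X Z → rightPerp T Z → ∃ (T' : C) (f : T' ⟶ Z), IsPrecover T f ∧ X T') :
    (∃ ω : C → Prop, RelGen ω X ∧ ∀ W, ω W → VeeRel T X W) ↔
      ((∀ A, rightPerp T A → X A → Fac T X 1 A) ∧
        ∃ ω : C → Prop, RelGen ω X ∧ ∀ W, ω W → VeeRel (fun A => T A ∧ X A) X W) := by
  constructor
  · rintro ⟨ω, hgen, hfin⟩
    constructor
    · intro A hA hAX
      obtain ⟨X', W, hX', hW, i, g, wi, h1⟩ := hgen.2 A hAX
      have hWX : X W := hgen.1 W hW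
      obtain ⟨n, hcor⟩ := hfin W hW
      cases n with
      | zero => exact ⟨X', W, hX', ⟨hcor.1, hcor.2⟩, ⟨i, g, wi, h1⟩, trivial⟩
      | succ n =>
        obtain ⟨Y0, N0, hY0T, hN0X, ⟨ι, p, wp, h2⟩, hres⟩ := hcor
        have hvan : extVanish N0 A := extVanish_of_coresLen hA n N0 hres
        obtain ⟨h, hh⟩ := exists_factor_of_ext1_subsingleton h2 (hvan 1 le_rfl) g
        obtain ⟨K, a, b, f', g', wab, wfg, hs1, hs2⟩ := fac_step i g wi h1 ι p wp h2 h hh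
        have hY0X : X Y0 := hXext ⟨ι, p, wp, h2⟩ hWX hN0X
        have hKX : X K := hXext ⟨a, b, wab, hs1⟩ hX' hN0X
        exact ⟨K, Y0, hKX, ⟨hY0T, hY0X⟩, ⟨f', g', wfg, hs2⟩, trivial⟩
    · refine ⟨ω, hgen, fun W hW => ?_⟩
      obtain ⟨n, hc⟩ := hfin W hW
      exact ⟨n, coresLen_inter hXext n W (hgen.1 W hW) hc⟩
  · rintro ⟨_, ω, hgen, hfin⟩
    refine ⟨ω, hgen, fun W hW => ?_⟩
    obtain ⟨n, hc⟩ := hfin W hW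
    exact ⟨n, coresLen_mono n W hc⟩

end RelTilting
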